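/- Let θ : BS(2,3) → BS(2,3) be the unique group homomorphism with θ(a) = a⁻⁵ and θ(t) = t, let φ : BS(2,3) → Q(2,3) be the unique group homomorphism with φ(a) = (1,0) and φ(t) = (0,1), and let f : Q(2,3) → Q(2,3) be the endomorphism f(x, y) = (−5x, y). Then φ ∘ θ = f ∘ φ; for every integer k ≥ 1, φ(im θ^k) = im f^k; and ker φ ⊆ ⋂_{k=1}^∞ im θ^k. -/

import Mathlib

open Multiplicative

/-- `ℤ[1/6]` as an additive subgroup of `ℚ`. -/
def Z16 : AddSubgroup ℚ where
  carrier := {q : ℚ | ∃ (m : ℤ) (k : ℕ), q = m / 6 ^ k}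
  zero_mem' := ⟨0, 0, by norm_num⟩
  add_mem' := by
    rintro a b ⟨m, k, rfl⟩ ⟨m', k', rfl⟩
    refine ⟨m * 6 ^ k' + m' * 6 ^ k, k + k', ?_⟩
    push_cast
    rw [pow_add]
    field_simp
  neg_mem' := by
    rintro a ⟨m, k, rfl⟩
    exact ⟨-m, k, by push_cast; ring⟩

/-- Multiplication by `3/2` as an additive automorphism of `ℤ[1/6]`. -/
def mul32 : Z16 ≃+ Z16 where
  toFun q := ⟨(3 / 2 : ℚ) * q, by
    obtain ⟨m, k, hq⟩ := q.2
    refine ⟨9 * m, k + 1, ?_⟩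
    rw [hq]; push_cast; rw [pow_succ]; field_simp; ring⟩
  invFun q := ⟨(2 / 3 : ℚ) * q, by
    obtain ⟨m, k, hq⟩ := q.2
    refine ⟨4 * m, k + 1, ?_⟩
    rw [hq]; push_cast; rw [pow_succ]; field_simp; ring⟩
  left_inv q := Subtype.ext (by
    show (2 / 3 : ℚ) * ((3 / 2 : ℚ) * (q : ℚ)) = (q : ℚ)
    ring)
  right_inv q := Subtype.ext (by
    show (3 / 2 : ℚ) * ((2 / 3 : ℚ) * (q : ℚ)) = (q : ℚ)
    ring)
  map_add' a b := Subtype.ext (by push_cast; ring)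

/-- The action of `ℤ` on `ℤ[1/6]` in which `1` acts by multiplication by `3/2`. -/
def phiQ : Multiplicative ℤ →* MulAut (Multiplicative Z16) :=
  zpowersHom (MulAut (Multiplicative Z16)) (AddEquiv.toMultiplicative mul32)

/-- The group `Q(2,3) = ℤ[1/6] ⋊ ℤ`, where the generator `1 ∈ ℤ` acts on `ℤ[1/6]` by
multiplication by `3/2`. -/
abbrev Q23 : Type := SemidirectProduct (Multiplicative Z16) (Multiplicative ℤ) phiQ

/-- The element `(1, 0)` of `Q(2,3)`. -/
def Qa : Q23 := SemidirectProduct.inl (ofAdd (⟨1, 1, 0, by norm_num⟩ : Z16))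

/-- The element `(0, 1)` of `Q(2,3)`. -/
def Qt : Q23 := SemidirectProduct.inr (ofAdd (1 : ℤ))

/-- The single relator `t a² t⁻¹ a⁻³` of the Baumslag–Solitar group `BS(2,3)`,
with generator `0` playing the role of `a` and generator `1` the role of `t`. -/
def BSrels : Set (FreeGroup (Fin 2)) :=
  {FreeGroup.of 1 * FreeGroup.of 0 ^ 2 * (FreeGroup.of 1)⁻¹ * (FreeGroup.of 0 ^ 3)⁻¹}

/-- The Baumslag–Solitar group `BS(2,3) = ⟨a, t ∣ t a² t⁻¹ = a³⟩`. -/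
abbrev BS23 : Type := PresentedGroup BSrels

/-- The generator `a` of `BS(2,3)`. -/
def BSa : BS23 := PresentedGroup.of 0

/-- The generator `t` of `BS(2,3)`. -/
def BSt : BS23 := PresentedGroup.of 1

/-- The `k`-th iterate of a group endomorphism. -/
def iterHom {G : Type*} [Group G] (f : G →* G) : ℕ → (G →* G)
  | 0 => MonoidHom.id G
  | k + 1 => (iterHom f k).comp f


namespace BSQaux

open SemidirectProduct

def e1 : Z16 := ⟨1, 1, 0, by norm_num⟩

lemma sigma_coe (x : Z16) :
    ((toAdd ((AddEquiv.toMultiplicative mul32) (ofAdd x)) : Z16) : ℚ) = 3 / 2 * (x : ℚ) := rfl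

lemma phiQ_coe (y : ℤ) (x : Z16) :
    ((toAdd ((phiQ (ofAdd y)) (ofAdd x)) : Z16) : ℚ) = (3 / 2 : ℚ) ^ y * (x : ℚ) := by
  have h32 : (3 / 2 : ℚ) ≠ 0 := by norm_num
  set σ : MulAut (Multiplicative Z16) := AddEquiv.toMultiplicative mul32 with hσ
  have hz : ∀ z : ℤ, phiQ (ofAdd z) = σ ^ z := fun z => rfl
  rw [hz]
  induction y using Int.induction_on generalizing x with
  | zero => simp
  | succ i ih =>
    rw [zpow_add_one σ i, MulAut.mul_apply,
      show σ (ofAdd x) = ofAdd (toAdd (σ (ofAdd x))) from rfl, ih, sigma_coe,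
      zpow_add_one₀ h32]
    ring
  | pred i ih =>
    have key : (σ ^ (-(i : ℤ))) (ofAdd x)
        = σ (ofAdd (toAdd ((σ ^ (-(i : ℤ) - 1)) (ofAdd x)))) := by
      rw [show σ ^ (-(i : ℤ)) = σ * σ ^ (-(i : ℤ) - 1) by
            rw [← zpow_one_add σ (-(i : ℤ) - 1)]; ring_nf, MulAut.mul_apply]
      rfl
    have h1 := ih x
    rw [key, sigma_coe] at h1
    have h2 : (3 / 2 : ℚ) ^ (-(i : ℤ)) = (3 / 2 : ℚ) ^ (-(i : ℤ) - 1) * (3 / 2) := by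
      rw [← zpow_add_one₀ h32]; ring_nf
    rw [h2] at h1
    linarith [h1]

end BSQaux
namespace BSQaux

def Z16K (k : ℕ) : AddSubgroup ℚ where
  carrier := {q : ℚ | ∃ (m : ℤ) (n : ℕ), q = 5 ^ k * m / 6 ^ n}
  zero_mem' := ⟨0, 0, by norm_num⟩
  add_mem' := by
    rintro a b ⟨m, n, rfl⟩ ⟨m', n', rfl⟩
    refine ⟨m * 6 ^ n' + m' * 6 ^ n, n + n', ?_⟩
    push_cast
    rw [pow_add]
    field_simp
  neg_mem' := by
    rintro a ⟨m, n, rfl⟩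
    exact ⟨-m, n, by push_cast; ring⟩

lemma Z16K_mul32 (k : ℕ) {q : ℚ} (h : q ∈ Z16K k) : 3 / 2 * q ∈ Z16K k := by
  obtain ⟨m, n, rfl⟩ := h
  refine ⟨9 * m, n + 1, ?_⟩
  push_cast
  rw [pow_succ]
  field_simp
  ring

lemma Z16K_mul23 (k : ℕ) {q : ℚ} (h : q ∈ Z16K k) : 2 / 3 * q ∈ Z16K k := by
  obtain ⟨m, n, rfl⟩ := h
  refine ⟨4 * m, n + 1, ?_⟩
  push_cast
  rw [pow_succ]
  field_simp
  ring

lemma Z16K_zpow (k : ℕ) (y : ℤ) {q : ℚ} (h : q ∈ Z16K k) : (3 / 2 : ℚ) ^ y * q ∈ Z16K k := by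
  induction y using Int.induction_on with
  | zero => simpa using h
  | succ i ih =>
    have := Z16K_mul32 k ih
    rw [show (3 / 2 : ℚ) * ((3 / 2 : ℚ) ^ (i : ℤ) * q)
        = (3 / 2 : ℚ) ^ ((i : ℤ) + 1) * q by rw [zpow_add_one₀ (by norm_num)]; ring] at this
    exact this
  | pred i ih =>
    have := Z16K_mul23 k ih
    rw [show (2 / 3 : ℚ) * ((3 / 2 : ℚ) ^ (-(i : ℤ)) * q)
        = (3 / 2 : ℚ) ^ (-(i : ℤ) - 1) * q by
      rw [show (-(i : ℤ) - 1) = -(i : ℤ) + -1 by ring, zpow_add₀ (by norm_num : (3/2:ℚ) ≠ 0)]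
      norm_num; ring] at this
    exact this

/-- The subgroup `5^k ℤ[1/6] ⋊ ℤ` of `Q23`. -/
def MK (k : ℕ) : Subgroup Q23 where
  carrier := {g : Q23 | ((toAdd g.left : Z16) : ℚ) ∈ Z16K k}
  one_mem' := by
    show (((toAdd (1 : Multiplicative Z16) : Z16)) : ℚ) ∈ Z16K k
    simpa using (Z16K k).zero_mem
  mul_mem' := by
    intro a b ha hb
    show ((toAdd (a * b).left : Z16) : ℚ) ∈ Z16K k
    rw [SemidirectProduct.mul_left]
    have : (toAdd (a.left * (phiQ a.right) b.left) : Z16)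
        = toAdd a.left + toAdd ((phiQ a.right) b.left) := rfl
    rw [this]
    push_cast
    refine (Z16K k).add_mem ha ?_
    have hb' : ((toAdd ((phiQ (ofAdd (toAdd a.right))) (ofAdd (toAdd b.left))) : Z16) : ℚ)
        = (3 / 2 : ℚ) ^ (toAdd a.right) * ((toAdd b.left : Z16) : ℚ) := phiQ_coe _ _
    simp only [ofAdd_toAdd] at hb'
    rw [hb']
    exact Z16K_zpow k _ hb
  inv_mem' := by
    intro a ha
    show ((toAdd a⁻¹.left : Z16) : ℚ) ∈ Z16K k
    rw [SemidirectProduct.inv_left]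
    have h1 : ((toAdd ((phiQ (ofAdd (toAdd a.right⁻¹))) (ofAdd (toAdd a.left⁻¹))) : Z16) : ℚ)
        = (3 / 2 : ℚ) ^ (toAdd a.right⁻¹) * ((toAdd a.left⁻¹ : Z16) : ℚ) := phiQ_coe _ _
    simp only [ofAdd_toAdd] at h1
    rw [h1]
    have h2 : ((toAdd a.left⁻¹ : Z16) : ℚ) = -((toAdd a.left : Z16) : ℚ) := by
      have : (toAdd a.left⁻¹ : Z16) = -(toAdd a.left) := rfl
      rw [this]; push_cast; ring
    rw [h2]
    exact Z16K_zpow k _ ((Z16K k).neg_mem ha)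

lemma Qa_zpow (i : ℤ) : Qa ^ i = SemidirectProduct.inl (ofAdd (i • e1)) := by
  rw [Qa, ← map_zpow, ofAdd_zsmul]
  rfl

lemma Qa_zpow_mem_MK {k : ℕ} {i : ℤ} (h : Qa ^ i ∈ MK k) : (5 : ℤ) ^ k ∣ i := by
  rw [Qa_zpow] at h
  have h' : ((toAdd (SemidirectProduct.inl (ofAdd (i • e1)) : Q23).left : Z16) : ℚ) ∈ Z16K k := h
  rw [SemidirectProduct.left_inl] at h'
  have : ((toAdd (ofAdd (i • e1)) : Z16) : ℚ) = (i : ℚ) := by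
    show (((i • e1 : Z16)) : ℚ) = (i : ℚ)
    have h1 : ((i • e1 : Z16) : ℚ) = (i : ℚ) * ((e1 : Z16) : ℚ) := by
      push_cast [zsmul_eq_mul]; ring
    rw [h1, show ((e1 : Z16) : ℚ) = 1 from rfl, mul_one]
  rw [this] at h'
  obtain ⟨m, n, hmn⟩ := h'
  have hint : i * 6 ^ n = 5 ^ k * m := by
    have : (i : ℚ) * 6 ^ n = 5 ^ k * m := by
      field_simp at hmn
      exact_mod_cast hmn
    exact_mod_cast this
  have hdvd : (5 : ℤ) ^ k ∣ i * 6 ^ n := ⟨m, hint⟩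
  have hcop : IsCoprime ((5 : ℤ) ^ k) ((6 : ℤ) ^ n) :=
    (Int.isCoprime_iff_gcd_eq_one.mpr (by norm_num)).pow
  exact hcop.dvd_of_dvd_mul_right hdvd

end BSQaux
namespace BSQaux

open SemidirectProduct Subgroup

lemma Qt_zpow (y : ℤ) : Qt ^ y = SemidirectProduct.inr (ofAdd y) := by
  rw [Qt, ← map_zpow, ← ofAdd_zsmul, smul_eq_mul, mul_one]

lemma Q_closure_top : Subgroup.closure ({Qa, Qt} : Set Q23) = ⊤ := by
  set C := Subgroup.closure ({Qa, Qt} : Set Q23) with hC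
  have hQaC : Qa ∈ C := subset_closure (by simp)
  have hQtC : ∀ y : ℤ, (SemidirectProduct.inr (ofAdd y) : Q23) ∈ C := by
    intro y
    rw [← Qt_zpow]
    exact zpow_mem (subset_closure (by simp)) y
  have hconj : ∀ n : ℤ, (SemidirectProduct.inl ((phiQ (ofAdd n)) (ofAdd e1)) : Q23) ∈ C := by
    intro n
    rw [show Qa = SemidirectProduct.inl (ofAdd e1) from rfl] at hQaC
    rw [inl_aut]
    have hinv := hQtC (-n)
    rw [ofAdd_neg] at hinv
    exact mul_mem (mul_mem (hQtC n) hQaC) hinv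
  -- all inl elements
  have hinl : ∀ x : Z16, (SemidirectProduct.inl (ofAdd x) : Q23) ∈ C := by
    rintro ⟨q, m, n, rfl⟩
    obtain ⟨u, v, huv⟩ : ∃ u v : ℤ, u * 9 ^ n + v * 4 ^ n = 1 := by
      have : IsCoprime ((9 : ℤ) ^ n) ((4 : ℤ) ^ n) :=
        (Int.isCoprime_iff_gcd_eq_one.mpr (by norm_num)).pow
      obtain ⟨u, v, huv⟩ := this
      exact ⟨u, v, huv⟩
    set p : ℤ → Z16 := fun j => toAdd ((phiQ (ofAdd j)) (ofAdd e1)) with hp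
    have hpc : ∀ j : ℤ, ((p j : Z16) : ℚ) = (3 / 2 : ℚ) ^ j := by
      intro j
      have := phiQ_coe j e1
      rwa [show ((e1 : Z16) : ℚ) = 1 from rfl, mul_one] at this
    have hxval : (⟨(m : ℚ) / 6 ^ n, m, n, rfl⟩ : Z16) = m • (u • p n + v • p (-(n : ℤ))) := by
      apply Subtype.ext
      push_cast [zsmul_eq_mul]
      rw [hpc, hpc]
      have h1 : (3 / 2 : ℚ) ^ (n : ℤ) = 9 ^ n / 6 ^ n := by
        rw [zpow_natCast]
        rw [div_pow ]
        rw [show ((9:ℚ)) = (3/2)*6 by norm_num, mul_pow]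
        field_simp
        rw [← mul_pow]; norm_num
      have h2 : (3 / 2 : ℚ) ^ (-(n : ℤ)) = 4 ^ n / 6 ^ n := by
        rw [zpow_neg, h1, inv_div, div_eq_div_iff (by positivity) (by positivity),
          ← mul_pow, ← mul_pow]
        norm_num
      rw [h1, h2]
      have h6 : ((6 : ℚ) ^ n) ≠ 0 := by positivity
      field_simp
      have : ((u : ℚ) * 9 ^ n + (v : ℚ) * 4 ^ n) = 1 := by exact_mod_cast huv
      linear_combination (-(m : ℚ)) * this
    rw [hxval]
    have hmem : ∀ (j : ℤ), (SemidirectProduct.inl (ofAdd (p j)) : Q23) ∈ C := by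
      intro j
      have := hconj j
      rwa [show (phiQ (ofAdd j)) (ofAdd e1) = ofAdd (p j) from rfl] at this
    rw [ofAdd_zsmul, map_zpow]
    refine zpow_mem ?_ m
    rw [ofAdd_add, ofAdd_zsmul, ofAdd_zsmul, map_mul, map_zpow, map_zpow]
    exact mul_mem (zpow_mem (hmem _) u) (zpow_mem (hmem _) v)
  rw [eq_top_iff]
  intro g _
  rw [← inl_left_mul_inr_right g]
  refine mul_mem ?_ (hQtC (toAdd g.right))
  have := hinl (toAdd g.left)
  rwa [ofAdd_toAdd] at this

end BSQaux
namespace BSQaux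

open Subgroup

lemma BS_closure_top : Subgroup.closure ({BSa, BSt} : Set BS23) = ⊤ := by
  have h := PresentedGroup.closure_range_of BSrels
  have hr : Set.range (PresentedGroup.of : Fin 2 → BS23) = {BSa, BSt} := by
    ext g
    constructor
    · rintro ⟨i, rfl⟩
      fin_cases i
      · left; rfl
      · right; rfl
    · rintro (rfl | rfl)
      · exact ⟨0, rfl⟩
      · exact ⟨1, rfl⟩
  rwa [hr] at h

lemma BS_rel : BSt * BSa ^ (2 : ℤ) * BSt⁻¹ = BSa ^ (3 : ℤ) := by
  have h1 : PresentedGroup.mk BSrels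
      (FreeGroup.of 1 * FreeGroup.of 0 ^ 2 * (FreeGroup.of 1)⁻¹ * (FreeGroup.of 0 ^ 3)⁻¹) = 1 := by
    apply (QuotientGroup.eq_one_iff _).2
    exact Subgroup.subset_normalClosure (by simp [BSrels])
  rw [map_mul, map_mul, map_mul, map_inv, map_inv, map_pow, map_pow, mul_inv_eq_one] at h1
  have h2 : (PresentedGroup.mk BSrels (FreeGroup.of 0)) = BSa := rfl
  have h3 : (PresentedGroup.mk BSrels (FreeGroup.of 1)) = BSt := rfl
  rw [h2, h3] at h1
  rw [show ((2:ℤ) = ((2:ℕ):ℤ)) from rfl, show ((3:ℤ) = ((3:ℕ):ℤ)) from rfl,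
    zpow_natCast, zpow_natCast]
  exact h1

lemma BS_rel_z (m : ℤ) : BSt * BSa ^ (2 * m) * BSt⁻¹ = BSa ^ (3 * m) := by
  rw [zpow_mul, zpow_mul, ← conj_zpow, BS_rel]

lemma BS_rel_t (m : ℤ) : BSt * BSa ^ (2 * m) = BSa ^ (3 * m) * BSt := by
  rw [← BS_rel_z m, inv_mul_cancel_right]

lemma BS_rel_t' (m : ℤ) : BSt⁻¹ * BSa ^ (3 * m) = BSa ^ (2 * m) * BSt⁻¹ := by
  rw [← BS_rel_z m]
  group

/-- The subgroup `⟨a^((-5)^k), t⟩`, which is the image of `θ^k`. -/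
def Hk (k : ℕ) : Subgroup BS23 := Subgroup.closure {BSa ^ ((-5 : ℤ) ^ k), BSt}

lemma htH (k : ℕ) : BSt ∈ Hk k := subset_closure (by simp)

lemma haH (k : ℕ) (m : ℤ) : BSa ^ (m * 5 ^ k) ∈ Hk k := by
  have h0 : BSa ^ ((-5 : ℤ) ^ k) ∈ Hk k := subset_closure (by simp)
  have he : BSa ^ (m * 5 ^ k) = (BSa ^ ((-5 : ℤ) ^ k)) ^ (m * (-1 : ℤ) ^ k) := by
    rw [← zpow_mul]
    congr 1
    have h1 : ((-1 : ℤ) ^ k) * ((-1 : ℤ) ^ k) = 1 := by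
      rw [← mul_pow]; norm_num
    have h2 : (-5 : ℤ) ^ k = (-1 : ℤ) ^ k * 5 ^ k := by
      rw [← mul_pow]; norm_num
    rw [h2, show (-1 : ℤ) ^ k * 5 ^ k * (m * (-1 : ℤ) ^ k)
        = m * 5 ^ k * ((-1 : ℤ) ^ k * (-1 : ℤ) ^ k) from by ring, h1, mul_one]
  rw [he]
  exact zpow_mem h0 _

lemma ha5H (k : ℕ) (m : ℤ) : BSa ^ (m * (-5 : ℤ) ^ k) ∈ Hk k := by
  have h2 : (-5 : ℤ) ^ k = (-1 : ℤ) ^ k * 5 ^ k := by rw [← mul_pow]; norm_num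
  have : m * (-5 : ℤ) ^ k = (m * (-1 : ℤ) ^ k) * 5 ^ k := by rw [h2]; ring
  rw [this]
  exact haH k _

lemma key (k : ℕ) : ∀ g ∈ Hk k,
    (∀ j : ℤ, ∃ j' : ℤ, BSa ^ (-j') * g * BSa ^ j ∈ Hk k) ∧
    (∀ j : ℤ, ∃ j' : ℤ, BSa ^ (-j') * g⁻¹ * BSa ^ j ∈ Hk k) := by
  intro g hg
  induction hg using Subgroup.closure_induction with
  | mem x hx =>
    rcases hx with rfl | rfl
    · constructor
      · intro j
        refine ⟨(-5 : ℤ) ^ k + j, ?_⟩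
        have : BSa ^ (-((-5 : ℤ) ^ k + j)) * BSa ^ ((-5 : ℤ) ^ k) * BSa ^ j = 1 := by
          rw [← zpow_add, ← zpow_add]; norm_num
        rw [this]; exact one_mem _
      · intro j
        refine ⟨-(-5 : ℤ) ^ k + j, ?_⟩
        have : BSa ^ (-(-(-5 : ℤ) ^ k + j)) * (BSa ^ ((-5 : ℤ) ^ k))⁻¹ * BSa ^ j = 1 := by
          rw [← zpow_neg, ← zpow_add, ← zpow_add]; norm_num
        rw [this]; exact one_mem _
    · have hfor : ∀ j : ℤ, ∃ j' : ℤ, BSa ^ (-j') * BSt * BSa ^ j ∈ Hk k := by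
        intro j
        obtain ⟨l, hl⟩ : Odd ((5 : ℤ) ^ k) := Odd.pow (by decide)
        -- j = 2 * m + j * 5^k with m = -(j*l)
        set m : ℤ := -(j * l) with hm
        have hj : j = 2 * m + j * 5 ^ k := by rw [hm]; linear_combination (-j) * hl
        refine ⟨3 * m, ?_⟩
        have he : BSa ^ (-(3 * m)) * BSt * BSa ^ j = BSt * BSa ^ (j * 5 ^ k) := by
          calc BSa ^ (-(3 * m)) * BSt * BSa ^ j
              = BSa ^ (-(3 * m)) * (BSt * BSa ^ (2 * m) * BSa ^ (j * 5 ^ k)) := by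
                rw [mul_assoc, mul_assoc BSt, ← zpow_add, ← hj]
            _ = BSa ^ (-(3 * m)) * (BSa ^ (3 * m) * BSt * BSa ^ (j * 5 ^ k)) := by
                rw [BS_rel_t]
            _ = BSt * BSa ^ (j * 5 ^ k) := by group
        rw [he]
        exact mul_mem (htH k) (haH k j)
      have hback : ∀ j : ℤ, ∃ j' : ℤ, BSa ^ (-j') * BSt⁻¹ * BSa ^ j ∈ Hk k := by
        intro j
        obtain ⟨d, hd⟩ : (3 : ℤ) ∣ 1 - (-5) ^ k := by
          have h1 : (-5 : ℤ) ≡ 1 [ZMOD 3] := by decide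
          have h2 : ((-5 : ℤ)) ^ k ≡ 1 ^ k [ZMOD 3] := h1.pow k
          rw [one_pow] at h2
          exact h2.dvd
        set m : ℤ := j * d with hm
        have hj : j = 3 * m + j * (-5) ^ k := by rw [hm]; linear_combination j * hd
        refine ⟨2 * m, ?_⟩
        have he : BSa ^ (-(2 * m)) * BSt⁻¹ * BSa ^ j = BSt⁻¹ * BSa ^ (j * (-5) ^ k) := by
          calc BSa ^ (-(2 * m)) * BSt⁻¹ * BSa ^ j
              = BSa ^ (-(2 * m)) * (BSt⁻¹ * BSa ^ (3 * m) * BSa ^ (j * (-5) ^ k)) := by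
                rw [mul_assoc, mul_assoc BSt⁻¹, ← zpow_add, ← hj]
            _ = BSa ^ (-(2 * m)) * (BSa ^ (2 * m) * BSt⁻¹ * BSa ^ (j * (-5) ^ k)) := by
                rw [BS_rel_t']
            _ = BSt⁻¹ * BSa ^ (j * (-5) ^ k) := by group
        rw [he]
        exact mul_mem (inv_mem (htH k)) (ha5H k j)
      exact ⟨hfor, hback⟩
  | one =>
    constructor
    · intro j
      refine ⟨j, ?_⟩
      rw [show BSa ^ (-j) * (1 : BS23) * BSa ^ j = 1 by group]
      exact one_mem _
    · intro j
      refine ⟨j, ?_⟩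
      rw [show BSa ^ (-j) * (1 : BS23)⁻¹ * BSa ^ j = 1 by group]
      exact one_mem _
  | mul x y hx hy ihx ihy =>
    constructor
    · intro j
      obtain ⟨j2, h2⟩ := ihy.1 j
      obtain ⟨j1, h1⟩ := ihx.1 j2
      refine ⟨j1, ?_⟩
      have : BSa ^ (-j1) * (x * y) * BSa ^ j
          = (BSa ^ (-j1) * x * BSa ^ j2) * (BSa ^ (-j2) * y * BSa ^ j) := by group
      rw [this]; exact mul_mem h1 h2
    · intro j
      obtain ⟨j2, h2⟩ := ihx.2 j
      obtain ⟨j1, h1⟩ := ihy.2 j2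
      refine ⟨j1, ?_⟩
      have : BSa ^ (-j1) * (x * y)⁻¹ * BSa ^ j
          = (BSa ^ (-j1) * y⁻¹ * BSa ^ j2) * (BSa ^ (-j2) * x⁻¹ * BSa ^ j) := by group
      rw [this]; exact mul_mem h1 h2
  | inv x hx ih =>
    refine ⟨ih.2, ?_⟩
    intro j
    obtain ⟨j', h⟩ := ih.1 j
    exact ⟨j', by rwa [inv_inv]⟩

lemma cover (k : ℕ) (g : BS23) : ∃ i : ℤ, BSa ^ (-i) * g ∈ Hk k := by
  have hg : g ∈ Subgroup.closure ({BSa, BSt} : Set BS23) := by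
    rw [BS_closure_top]; trivial
  induction hg using Subgroup.closure_induction with
  | mem x hx =>
    rcases hx with rfl | rfl
    · exact ⟨1, by rw [show BSa ^ (-1 : ℤ) * BSa = 1 by group]; exact one_mem _⟩
    · exact ⟨0, by rw [show BSa ^ (-0 : ℤ) * BSt = BSt by group]; exact htH k⟩
  | one => exact ⟨0, by rw [show BSa ^ (-0 : ℤ) * 1 = 1 by group]; exact one_mem _⟩
  | mul x y hx hy ihx ihy =>
    obtain ⟨i1, h1⟩ := ihx
    obtain ⟨i2, h2⟩ := ihy
    obtain ⟨j', hj⟩ := (key k _ h1).1 i2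
    refine ⟨i1 + j', ?_⟩
    have : BSa ^ (-(i1 + j')) * (x * y)
        = (BSa ^ (-j') * (BSa ^ (-i1) * x) * BSa ^ i2) * (BSa ^ (-i2) * y) := by group
    rw [this]; exact mul_mem hj h2
  | inv x hx ih =>
    obtain ⟨i, h⟩ := ih
    obtain ⟨j', hj⟩ := (key k _ h).2 (-i)
    refine ⟨j', ?_⟩
    have : BSa ^ (-j') * x⁻¹ = BSa ^ (-j') * (BSa ^ (-i) * x)⁻¹ * BSa ^ (-i) := by group
    rw [this]; exact hj

end BSQaux
namespace BSQaux

open Subgroup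

lemma smul_e1_coe (i : ℤ) : ((i • e1 : Z16) : ℚ) = (i : ℚ) := by
  have h1 : ((i • e1 : Z16) : ℚ) = (i : ℚ) * ((e1 : Z16) : ℚ) := by
    push_cast [zsmul_eq_mul]; ring
  rw [h1, show ((e1 : Z16) : ℚ) = 1 from rfl, mul_one]

lemma Qa_zpow_mem_MK' (k : ℕ) {z : ℤ} (h : (5 : ℤ) ^ k ∣ z) : Qa ^ z ∈ MK k := by
  rw [Qa_zpow]
  show ((toAdd (ofAdd (z • e1)) : Z16) : ℚ) ∈ Z16K k
  obtain ⟨m, rfl⟩ := h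
  refine ⟨m, 0, ?_⟩
  rw [show ((toAdd (ofAdd ((5 ^ k * m) • e1)) : Z16) : ℚ) = (((5:ℤ) ^ k * m : ℤ) : ℚ) from
    smul_e1_coe _]
  push_cast
  norm_num

lemma Qt_mem_MK (k : ℕ) : Qt ∈ MK k := by
  show ((toAdd ((Qt : Q23).left) : Z16) : ℚ) ∈ Z16K k
  rw [show (Qt : Q23).left = 1 from rfl]
  simpa using (Z16K k).zero_mem

lemma Qa_eq_pair : Qa = (⟨ofAdd e1, ofAdd (0 : ℤ)⟩ : Q23) := rfl

lemma Qt_eq_pair : Qt = (⟨ofAdd (0 : Z16), ofAdd (1 : ℤ)⟩ : Q23) := rfl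

end BSQaux

open BSQaux Subgroup


/-- **Lemma.** With `θ : BS(2,3) → BS(2,3)` the homomorphism determined by `θ(a) = a⁻⁵`,
`θ(t) = t`, `φ : BS(2,3) → Q(2,3)` the homomorphism determined by `φ(a) = (1,0)`,
`φ(t) = (0,1)`, and `f : Q(2,3) → Q(2,3)` given by `f(x,y) = (−5x, y)`, the square
`φ ∘ θ = f ∘ φ` commutes, `φ(im θᵏ) = im fᵏ` for all `k ≥ 1`, and
`ker φ ⊆ ⋂_{k≥1} im θᵏ`. -/
theorem BS23_Q23_commuting_square
    (θ : BS23 →* BS23) (hθa : θ BSa = BSa ^ (-5 : ℤ)) (hθt : θ BSt = BSt)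
    (φ : BS23 →* Q23) (hφa : φ BSa = Qa) (hφt : φ BSt = Qt)
    (f : Q23 →* Q23)
    (hf : ∀ (x : Z16) (y : ℤ), f ⟨ofAdd x, ofAdd y⟩ = ⟨ofAdd ((-5 : ℤ) • x), ofAdd y⟩) :
    φ.comp θ = f.comp φ ∧
      (∀ k : ℕ, 1 ≤ k →
        Subgroup.map φ (iterHom θ k).range = (iterHom f k).range) ∧
      φ.ker ≤ ⨅ k : ℕ, (iterHom θ (k + 1)).range := by
  have hfQa : f Qa = Qa ^ (-5 : ℤ) := by
    rw [Qa_zpow, Qa_eq_pair, hf e1 0]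
    rfl
  have hfQt : f Qt = Qt := by
    rw [Qt_eq_pair, hf 0 1, smul_zero]
  have part1 : φ.comp θ = f.comp φ := by
    apply PresentedGroup.ext
    intro x
    fin_cases x
    · show φ (θ BSa) = f (φ BSa)
      rw [hθa, map_zpow, hφa, hfQa]
    · show φ (θ BSt) = f (φ BSt)
      rw [hθt, hφt, hfQt]
  have hsq : ∀ x : BS23, φ (θ x) = f (φ x) := fun x => DFunLike.congr_fun part1 x
  have hsqk : ∀ (k : ℕ) (x : BS23), φ ((iterHom θ k) x) = (iterHom f k) (φ x) := by
    intro k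
    induction k with
    | zero => intro x; rfl
    | succ n ih =>
      intro x
      show φ ((iterHom θ n) (θ x)) = (iterHom f n) (f (φ x))
      rw [ih (θ x), hsq x]
  have hθak : ∀ k : ℕ, (iterHom θ k) BSa = BSa ^ ((-5 : ℤ) ^ k) := by
    intro k
    induction k with
    | zero => show BSa = _; rw [pow_zero, zpow_one]
    | succ n ih =>
      show (iterHom θ n) (θ BSa) = _
      rw [hθa, map_zpow, ih, ← zpow_mul, ← pow_succ]
  have hθtk : ∀ k : ℕ, (iterHom θ k) BSt = BSt := by
    intro k
    induction k with
    | zero => rfl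
    | succ n ih =>
      show (iterHom θ n) (θ BSt) = _
      rw [hθt, ih]
  have hrange : ∀ k : ℕ, (iterHom θ k).range = Hk k := by
    intro k
    rw [MonoidHom.range_eq_map, ← BS_closure_top, MonoidHom.map_closure, Set.image_pair,
      hθak, hθtk]
    rfl
  have hsurj : Function.Surjective φ := by
    have : φ.range = ⊤ := by
      rw [MonoidHom.range_eq_map, ← BS_closure_top, MonoidHom.map_closure, Set.image_pair,
        hφa, hφt, Q_closure_top]
    exact MonoidHom.range_eq_top.mp this
  have hker : ∀ k : ℕ, φ.ker ≤ Hk k := by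
    intro k g hg
    obtain ⟨i, hi⟩ := cover k g
    have hHM : Hk k ≤ (MK k).comap φ := by
      rw [Hk, Subgroup.closure_le]
      rintro x (rfl | rfl)
      · show φ (BSa ^ ((-5 : ℤ) ^ k)) ∈ MK k
        rw [map_zpow, hφa]
        refine Qa_zpow_mem_MK' k ⟨(-1 : ℤ) ^ k, ?_⟩
        rw [← mul_pow]
        norm_num
      · show φ BSt ∈ MK k
        rw [hφt]
        exact Qt_mem_MK k
    have h1 : φ (BSa ^ (-i)) ∈ MK k := by
      have h2 : φ (BSa ^ (-i) * g) ∈ MK k := hHM hi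
      rwa [map_mul, MonoidHom.mem_ker.mp hg, mul_one] at h2
    rw [map_zpow, hφa] at h1
    have h4 : (5 : ℤ) ^ k ∣ i := dvd_neg.mp (Qa_zpow_mem_MK h1)
    obtain ⟨m, hm⟩ := h4
    have hgi : g = BSa ^ i * (BSa ^ (-i) * g) := by group
    rw [hgi]
    refine mul_mem ?_ hi
    rw [hm, mul_comm ((5:ℤ) ^ k) m]
    exact haH k m
  refine ⟨part1, ?_, ?_⟩
  · intro k _
    apply le_antisymm
    · intro y hy
      rw [Subgroup.mem_map] at hy
      obtain ⟨g, hgr, rfl⟩ := hy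
      obtain ⟨x, rfl⟩ := hgr
      exact MonoidHom.mem_range.mpr ⟨φ x, (hsqk k x).symm⟩
    · rintro y ⟨p, rfl⟩
      obtain ⟨g, rfl⟩ := hsurj p
      rw [Subgroup.mem_map]
      exact ⟨(iterHom θ k) g, ⟨g, rfl⟩, hsqk k g⟩
  · refine le_iInf fun k => ?_
    rw [hrange (k + 1)]
    exact hker (k + 1)
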